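/- Let m = p^α be a prime power and A a matrix over Z_m with rank r (rank of the subgroup generated by its columns). Then A has an r × r submatrix of rank r. -/

import Mathlib

open Finset

/-- The rank of an additive abelian group: the minimal `r` such that it is isomorphic
to a product of `r` cyclic groups. -/
noncomputable def groupRank (G : Type*) [AddCommGroup G] : ℕ :=
  sInf {r : ℕ | ∃ c : Fin r → ℕ, Nonempty (G ≃+ ((i : Fin r) → ZMod (c i)))}

/-- The subgroup of `ZMod m ^ k` generated by the columns of a matrix. -/
def colSpan {m k l : ℕ} (A : Matrix (Fin k) (Fin l) (ZMod m)) :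
    AddSubgroup (Fin k → ZMod m) :=
  AddSubgroup.closure (Set.range fun j i => A i j)

/-- The rank of a matrix over `ZMod m`: the rank of its column space. -/
noncomputable def matrixRank {m k l : ℕ} (A : Matrix (Fin k) (Fin l) (ZMod m)) : ℕ :=
  groupRank (colSpan A)

/-! ### Auxiliary material -/

section Aux

open Module

variable {G H : Type*} [AddCommGroup G] [AddCommGroup H]

/-- Multiplication by `p` as an additive homomorphism. -/
def pHom (p : ℕ) (G : Type*) [AddCommGroup G] : G →+ G :=
  AddMonoidHom.mk' (fun x => p • x) fun a b => smul_add p a b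

@[simp] lemma pHom_apply (p : ℕ) (x : G) : pHom p G x = p • x := rfl

lemma groupRank_congr (e : G ≃+ H) : groupRank G = groupRank H := by
  unfold groupRank
  congr 1
  ext r
  constructor
  · rintro ⟨c, ⟨f⟩⟩; exact ⟨c, ⟨e.symm.trans f⟩⟩
  · rintro ⟨c, ⟨f⟩⟩; exact ⟨c, ⟨e.trans f⟩⟩

/-- Additive version of `Equiv.piCongrLeft'`. -/
def piCongrLeftAdd {ι κ : Type*} (N : ι → Type*) [∀ i, AddCommMonoid (N i)]
    (e : ι ≃ κ) : (∀ i, N i) ≃+ (∀ k, N (e.symm k)) :=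
  { Equiv.piCongrLeft' N e with map_add' := fun _ _ => rfl }

lemma groupRank_le {n : ℕ} {c : Fin n → ℕ} (f : G ≃+ ∀ i : Fin n, ZMod (c i)) :
    groupRank G ≤ n := Nat.sInf_le ⟨c, ⟨f⟩⟩

lemma exists_groupRank_equiv (G : Type*) [AddCommGroup G] [Finite G] :
    ∃ c : Fin (groupRank G) → ℕ, Nonempty (G ≃+ ∀ i, ZMod (c i)) := by
  have hne : {r : ℕ | ∃ c : Fin r → ℕ,
      Nonempty (G ≃+ ((i : Fin r) → ZMod (c i)))}.Nonempty := by
    obtain ⟨ι, hι, pp, hpp, ee, ⟨f⟩⟩ := AddCommGroup.equiv_directSum_zmod_of_finite G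
    haveI := hι
    let eqv := Fintype.equivFin ι
    exact ⟨Fintype.card ι, fun kk => pp (eqv.symm kk) ^ ee (eqv.symm kk),
      ⟨(f.trans (DirectSum.addEquivProd _)).trans
        (piCongrLeftAdd (fun i => ZMod (pp i ^ ee i)) eqv)⟩⟩
  exact Nat.sInf_mem hne

lemma groupRank_le_card_ne_one {ι : Type*} [Fintype ι] (c : ι → ℕ)
    (f : G ≃+ ∀ i, ZMod (c i)) : groupRank G ≤ Fintype.card {i // c i ≠ 1} := by
  classical
  let e2 : (∀ i, ZMod (c i)) ≃+ (∀ j : {i // c i ≠ 1}, ZMod (c j.1)) :=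
    { toFun := fun x j => x j.1
      invFun := fun y i => if h : c i = 1 then 0 else y ⟨i, h⟩
      left_inv := by
        intro x; funext i
        by_cases h : c i = 1
        · simp only [dif_pos h]
          haveI : Subsingleton (ZMod (c i)) := by rw [h]; infer_instance
          exact Subsingleton.elim _ _
        · simp only [dif_neg h]
      right_inv := by
        intro y; funext j
        exact dif_neg j.2
      map_add' := fun _ _ => rfl }
  let eqv : {i // c i ≠ 1} ≃ Fin (Fintype.card {i // c i ≠ 1}) := Fintype.equivFin _
  exact groupRank_le ((f.trans e2).trans
    (piCongrLeftAdd (fun j : {i // c i ≠ 1} => ZMod (c j.1)) eqv))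

/-! ### Arithmetic lemmas in `ZMod` -/

lemma zmod_mul_eq_zero_iff_dvd_val {m a d : ℕ} [NeZero m] (hm : a * d = m) (ha : 0 < a)
    (z : ZMod m) : (a : ZMod m) * z = 0 ↔ d ∣ z.val := by
  subst hm
  have hz : ((z.val : ℕ) : ZMod (a * d)) = z := ZMod.natCast_rightInverse z
  have h1 : (a : ZMod (a * d)) * z = ((a * z.val : ℕ) : ZMod (a * d)) := by
    rw [Nat.cast_mul, hz]
  rw [h1, ZMod.natCast_eq_zero_iff, Nat.mul_dvd_mul_iff_left ha]

lemma zmod_exists_mul_eq_iff_dvd_val {m d : ℕ} [NeZero m] (hdm : d ∣ m) (z : ZMod m) :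
    (∃ w, (d : ZMod m) * w = z) ↔ d ∣ z.val := by
  constructor
  · rintro ⟨w, rfl⟩
    rw [ZMod.val_mul]
    refine (Nat.dvd_mod_iff hdm).mpr (dvd_mul_of_dvd_left ?_ _)
    rw [ZMod.val_natCast]
    exact (Nat.dvd_mod_iff hdm).mpr dvd_rfl
  · rintro ⟨t, ht⟩
    refine ⟨(t : ZMod m), ?_⟩
    rw [← Nat.cast_mul, ← ht]
    exact ZMod.natCast_rightInverse z

section Components

variable {p β : ℕ}

lemma comp_fact (hp : p.Prime) (hβ : 1 ≤ β) : p * p ^ (β - 1) = p ^ β := by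
  rw [← pow_succ']
  congr 1
  omega

lemma comp_socle_iff (hp : p.Prime) (hβ : 1 ≤ β) (z : ZMod (p ^ β)) :
    p • z = 0 ↔ p ^ (β - 1) ∣ z.val := by
  haveI : NeZero (p ^ β) := ⟨pow_ne_zero β hp.pos.ne'⟩
  rw [nsmul_eq_mul]
  exact zmod_mul_eq_zero_iff_dvd_val (comp_fact hp hβ) hp.pos z

lemma comp_theta_iff (hp : p.Prime) (hβ : 1 ≤ β) (z : ZMod (p ^ β)) :
    ((p ^ (β - 1) : ℕ) : ZMod (p ^ β)) * z = 0 ↔ p ∣ z.val := by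
  haveI : NeZero (p ^ β) := ⟨pow_ne_zero β hp.pos.ne'⟩
  exact zmod_mul_eq_zero_iff_dvd_val (by rw [mul_comm]; exact comp_fact hp hβ)
    (pow_pos hp.pos _) z

lemma comp_chi_iff (hp : p.Prime) (hβ : 1 ≤ β) (hdvd : p ∣ p ^ β) (z : ZMod (p ^ β)) :
    ZMod.castHom hdvd (ZMod p) z = 0 ↔ p ∣ z.val := by
  haveI : NeZero (p ^ β) := ⟨pow_ne_zero β hp.pos.ne'⟩
  rw [ZMod.castHom_apply, ← ZMod.natCast_val, ZMod.natCast_eq_zero_iff]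

lemma comp_socle_exists_iff (hp : p.Prime) (hβ : 1 ≤ β) (z : ZMod (p ^ β)) :
    (∃ w, ((p ^ (β - 1) : ℕ) : ZMod (p ^ β)) * w = z) ↔ p ^ (β - 1) ∣ z.val := by
  haveI : NeZero (p ^ β) := ⟨pow_ne_zero β hp.pos.ne'⟩
  exact zmod_exists_mul_eq_iff_dvd_val ⟨p, by rw [mul_comm]; exact (comp_fact hp hβ).symm⟩ z

lemma comp_p_exists_iff (hp : p.Prime) (hβ : 1 ≤ β) (z : ZMod (p ^ β)) :
    (∃ w, (p : ZMod (p ^ β)) * w = z) ↔ p ∣ z.val := by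
  haveI : NeZero (p ^ β) := ⟨pow_ne_zero β hp.pos.ne'⟩
  exact zmod_exists_mul_eq_iff_dvd_val (dvd_pow_self p (Nat.one_le_iff_ne_zero.mp hβ)) z

lemma comp_chi_surj (hp : p.Prime) (hβ : 1 ≤ β) (hdvd : p ∣ p ^ β) :
    Function.Surjective (ZMod.castHom hdvd (ZMod p)) := by
  haveI : NeZero p := ⟨hp.pos.ne'⟩
  intro y
  obtain ⟨t, rfl⟩ := ZMod.natCast_zmod_surjective y
  exact ⟨(t : ZMod (p ^ β)), by rw [map_natCast]⟩

/-- The socle of `ZMod (p ^ β)` is isomorphic to `ZMod p`. -/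
noncomputable def socleEquivSingle (hp : p.Prime) (hβ : 1 ≤ β) :
    ↥((pHom p (ZMod (p ^ β))).ker) ≃+ ZMod p := by
  haveI : NeZero (p ^ β) := ⟨pow_ne_zero β hp.pos.ne'⟩
  have hdvd : p ∣ p ^ β := dvd_pow_self p (Nat.one_le_iff_ne_zero.mp hβ)
  let χ : ZMod (p ^ β) →+ ZMod p := (ZMod.castHom hdvd (ZMod p)).toAddMonoidHom
  let θ : ZMod (p ^ β) →+ ZMod (p ^ β) :=
    AddMonoidHom.mulLeft ((p ^ (β - 1) : ℕ) : ZMod (p ^ β))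
  have hchi : ∀ z : ZMod (p ^ β), χ z = 0 ↔ p ∣ z.val := fun z => comp_chi_iff hp hβ hdvd z
  have hker : θ.ker = χ.ker := by
    ext z
    simp only [AddMonoidHom.mem_ker]
    rw [hchi z]
    exact comp_theta_iff hp hβ z
  have hrange : θ.range = (pHom p (ZMod (p ^ β))).ker := by
    ext z
    simp only [AddMonoidHom.mem_range, AddMonoidHom.mem_ker, pHom_apply]
    rw [comp_socle_iff hp hβ]
    exact comp_socle_exists_iff hp hβ z
  have hchisurj : Function.Surjective χ := comp_chi_surj hp hβ hdvd
  exact ((AddEquiv.addSubgroupCongr hrange.symm).trans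
    ((QuotientAddGroup.quotientKerEquivRange θ).symm.trans
      ((QuotientAddGroup.quotientAddEquivOfEq hker).trans
        (QuotientAddGroup.quotientKerEquivOfSurjective χ hchisurj))))

end Components

section Products

variable {p r : ℕ} {β : Fin r → ℕ}

/-- Componentwise reduction mod `p` on a product of `ZMod (p ^ β i)`. -/
def PhiHom (hp : p.Prime) (hβ : ∀ i, 1 ≤ β i) :
    (∀ i : Fin r, ZMod (p ^ β i)) →+ (Fin r → ZMod p) :=
  AddMonoidHom.mk'
    (fun x j => ZMod.castHom (dvd_pow_self p (Nat.one_le_iff_ne_zero.mp (hβ j))) (ZMod p) (x j))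
    (fun a b => funext fun j => by simp [map_add])

lemma PhiHom_surj (hp : p.Prime) (hβ : ∀ i, 1 ≤ β i) :
    Function.Surjective (PhiHom hp hβ) := by
  intro y
  refine ⟨fun j => ?_, funext fun j => ?_⟩
  · exact (comp_chi_surj hp (hβ j) (dvd_pow_self p (Nat.one_le_iff_ne_zero.mp (hβ j))) (y j)).choose
  · exact (comp_chi_surj hp (hβ j) (dvd_pow_self p (Nat.one_le_iff_ne_zero.mp (hβ j))) (y j)).choose_spec

/-- The socle of a product of `ZMod (p ^ β i)` is `(ZMod p)^r`. -/
noncomputable def socleEquivPi (hp : p.Prime) (hβ : ∀ i, 1 ≤ β i) :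
    ↥((pHom p (∀ i : Fin r, ZMod (p ^ β i))).ker) ≃+ (Fin r → ZMod p) := by
  let P := ∀ i : Fin r, ZMod (p ^ β i)
  let Θ : P →+ P := AddMonoidHom.mk'
    (fun x i => ((p ^ (β i - 1) : ℕ) : ZMod (p ^ β i)) * x i)
    (fun a b => funext fun i => mul_add _ (a i) (b i))
  have hrange : Θ.range = (pHom p P).ker := by
    ext x
    simp only [AddMonoidHom.mem_range, AddMonoidHom.mem_ker, pHom_apply]
    constructor
    · rintro ⟨y, rfl⟩
      funext i
      show p • (((p ^ (β i - 1) : ℕ) : ZMod (p ^ β i)) * y i) = 0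
      rw [nsmul_eq_mul, ← mul_assoc, ← Nat.cast_mul, comp_fact hp (hβ i),
        ZMod.natCast_self, zero_mul]
    · intro hx
      have h1 : ∀ i, ∃ w, ((p ^ (β i - 1) : ℕ) : ZMod (p ^ β i)) * w = x i := by
        intro i
        rw [comp_socle_exists_iff hp (hβ i), ← comp_socle_iff hp (hβ i)]
        calc p • x i = (p • x) i := rfl
        _ = 0 := by rw [hx]; rfl
      exact ⟨fun i => (h1 i).choose, funext fun i => (h1 i).choose_spec⟩
  have hker : Θ.ker = (PhiHom hp hβ).ker := by
    ext x
    simp only [AddMonoidHom.mem_ker]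
    rw [funext_iff, funext_iff]
    apply forall_congr'
    intro i
    show ((p ^ (β i - 1) : ℕ) : ZMod (p ^ β i)) * x i = 0 ↔ _
    rw [comp_theta_iff hp (hβ i), ← comp_chi_iff hp (hβ i) (dvd_pow_self p (Nat.one_le_iff_ne_zero.mp (hβ i))) (x i)]
    rfl
  exact ((AddEquiv.addSubgroupCongr hrange.symm).trans
    ((QuotientAddGroup.quotientKerEquivRange Θ).symm.trans
      ((QuotientAddGroup.quotientAddEquivOfEq hker).trans
        (QuotientAddGroup.quotientKerEquivOfSurjective _ (PhiHom_surj hp hβ)))))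

/-- The quotient mod `p` of a product of `ZMod (p ^ β i)` is `(ZMod p)^r`. -/
noncomputable def quotEquivPi (hp : p.Prime) (hβ : ∀ i, 1 ≤ β i) :
    ((∀ i : Fin r, ZMod (p ^ β i)) ⧸ (pHom p (∀ i : Fin r, ZMod (p ^ β i))).range) ≃+
      (Fin r → ZMod p) := by
  let P := ∀ i : Fin r, ZMod (p ^ β i)
  have hre : (pHom p P).range = (PhiHom hp hβ).ker := by
    ext x
    simp only [AddMonoidHom.mem_range, AddMonoidHom.mem_ker, pHom_apply]
    constructor
    · rintro ⟨y, rfl⟩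
      funext j
      show ZMod.castHom (dvd_pow_self p (Nat.one_le_iff_ne_zero.mp (hβ j))) (ZMod p) ((p • y) j) = 0
      have : (p • y) j = (p : ZMod (p ^ β j)) * y j := by
        rw [← nsmul_eq_mul]; rfl
      rw [this, map_mul, map_natCast, ZMod.natCast_self, zero_mul]
    · intro hx
      have h1 : ∀ j, ∃ w, p • w = x j := by
        intro j
        have h2 : ZMod.castHom (dvd_pow_self p (Nat.one_le_iff_ne_zero.mp (hβ j))) (ZMod p) (x j) = 0 :=
          congrFun hx j
        rw [comp_chi_iff hp (hβ j) (dvd_pow_self p (Nat.one_le_iff_ne_zero.mp (hβ j)))] at h2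
        obtain ⟨w, hw⟩ := (comp_p_exists_iff hp (hβ j) (x j)).mpr h2
        exact ⟨w, by rw [nsmul_eq_mul, hw]⟩
      exact ⟨fun j => (h1 j).choose, funext fun j => by
        calc (p • fun j => (h1 j).choose) j = p • (h1 j).choose := rfl
        _ = x j := (h1 j).choose_spec⟩
  exact (QuotientAddGroup.quotientAddEquivOfEq hre).trans
    (QuotientAddGroup.quotientKerEquivOfSurjective _ (PhiHom_surj hp hβ))

end Products

/-! ### Transfer along `AddEquiv` -/

/-- An additive equivalence restricts to the kernels of multiplication by `p`. -/
def kerCongr (p : ℕ) (e : G ≃+ H) : ↥((pHom p G).ker) ≃+ ↥((pHom p H).ker) where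
  toFun x := ⟨e x.1, by
    have hx := x.2
    simp only [AddMonoidHom.mem_ker, pHom_apply] at hx ⊢
    rw [← map_nsmul, hx, map_zero]⟩
  invFun y := ⟨e.symm y.1, by
    have hy := y.2
    simp only [AddMonoidHom.mem_ker, pHom_apply] at hy ⊢
    rw [← map_nsmul, hy, map_zero]⟩
  left_inv x := Subtype.ext (e.symm_apply_apply _)
  right_inv y := Subtype.ext (e.apply_symm_apply _)
  map_add' a b := Subtype.ext (map_add e _ _)

lemma map_pHom_range (p : ℕ) (e : G ≃+ H) :
    ((pHom p G).range).map e.toAddMonoidHom = (pHom p H).range := by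
  ext z
  simp only [AddSubgroup.mem_map, AddMonoidHom.mem_range, pHom_apply]
  constructor
  · rintro ⟨x, ⟨y, rfl⟩, rfl⟩
    exact ⟨e y, by simp [map_nsmul]⟩
  · rintro ⟨w, rfl⟩
    exact ⟨p • e.symm w, ⟨e.symm w, rfl⟩, by simp [map_nsmul]⟩

lemma finrank_congr {n : ℕ} {M N : Type*} [AddCommGroup M] [AddCommGroup N]
    [Module (ZMod n) M] [Module (ZMod n) N] (e : M ≃+ N) :
    Module.finrank (ZMod n) M = Module.finrank (ZMod n) N :=
  LinearEquiv.finrank_eq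
    { e.toAddMonoidHom.toZModLinearMap n with
      invFun := e.symm
      left_inv := e.left_inv
      right_inv := e.right_inv }

/-! ### Selecting separating coordinates -/

lemma sep_exists (F : Type*) [Field F] :
    ∀ (n : ℕ) (S : Type) [AddCommGroup S] [Module F S] [FiniteDimensional F S]
      (ι : Type) (φ : ι → S →ₗ[F] F), Module.finrank F S = n →
      (∀ x : S, (∀ i, φ i x = 0) → x = 0) →
      ∃ f : Fin n → ι, Function.Injective f ∧
        ∀ x : S, (∀ j, φ (f j) x = 0) → x = 0 := by
  intro n
  induction n with
  | zero =>
    intro S _ _ _ ι φ hn _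
    refine ⟨Fin.elim0, fun a => a.elim0, fun x _ => ?_⟩
    haveI : Subsingleton S := (Module.finrank_zero_iff (R := F)).mp hn
    exact Subsingleton.elim x 0
  | succ n ih =>
    intro S _ _ _ ι φ hn hsep
    haveI : Nontrivial S := (Module.finrank_pos_iff (R := F)).mp (by omega)
    obtain ⟨x0, hx0⟩ := exists_ne (0 : S)
    have hi0 : ∃ i0, φ i0 x0 ≠ 0 := by
      by_contra hcon
      push_neg at hcon
      exact hx0 (hsep x0 hcon)
    obtain ⟨i0, hi0⟩ := hi0
    have hsurj : Function.Surjective (φ i0) := by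
      intro a
      refine ⟨(a * (φ i0 x0)⁻¹) • x0, ?_⟩
      rw [map_smul, smul_eq_mul]
      field_simp
    have hkrank : Module.finrank F ↥(LinearMap.ker (φ i0)) = n := by
      have h1 := LinearMap.finrank_range_add_finrank_ker (φ i0)
      rw [LinearMap.range_eq_top.mpr hsurj, finrank_top, Module.finrank_self, hn] at h1
      omega
    obtain ⟨f', hf'inj, hf'ker⟩ := ih ↥(LinearMap.ker (φ i0)) {i : ι // i ≠ i0}
      (fun j => (φ j.1).comp (LinearMap.ker (φ i0)).subtype) hkrank
      (by
        rintro ⟨x, hx⟩ hall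
        refine Subtype.ext (hsep x fun i => ?_)
        by_cases hii : i = i0
        · subst hii; exact LinearMap.mem_ker.mp hx
        · exact hall ⟨i, hii⟩)
    refine ⟨Fin.cons i0 (fun j => (f' j).1), ?_, ?_⟩
    · intro a b hab
      rcases Fin.eq_zero_or_eq_succ a with rfl | ⟨a', rfl⟩ <;>
        rcases Fin.eq_zero_or_eq_succ b with rfl | ⟨b', rfl⟩
      · rfl
      · rw [Fin.cons_zero, Fin.cons_succ] at hab
        exact absurd hab.symm (f' b').2
      · rw [Fin.cons_succ, Fin.cons_zero] at hab
        exact absurd hab (f' a').2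
      · rw [Fin.cons_succ, Fin.cons_succ] at hab
        exact congrArg Fin.succ (hf'inj (Subtype.ext hab))
    · intro x hx
      have hx0' : x ∈ LinearMap.ker (φ i0) := LinearMap.mem_ker.mpr (by
        have := hx 0
        rwa [Fin.cons_zero] at this)
      have := hf'ker ⟨x, hx0'⟩ (fun j => by
        have := hx j.succ
        rwa [Fin.cons_succ] at this)
      exact Subtype.ext_iff.mp this

end Aux

theorem full_rank_submatrix (p α k l r : ℕ) (hp : p.Prime) (hα : 0 < α)
    (A : Matrix (Fin k) (Fin l) (ZMod (p ^ α))) (hr : matrixRank A = r) :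
    ∃ (f : Fin r → Fin k) (g : Fin r → Fin l),
      Function.Injective f ∧ Function.Injective g ∧
      matrixRank (A.submatrix f g) = r := by
  classical
  haveI : Fact p.Prime := ⟨hp⟩
  haveI : NeZero p := ⟨hp.pos.ne'⟩
  haveI : NeZero (p ^ α) := ⟨pow_ne_zero α hp.pos.ne'⟩
  set Gsub := colSpan A with hGsub
  have hrk : groupRank ↥Gsub = r := hr
  -- everything in `Gsub` is killed by `p ^ α`
  have killer : ∀ y : ↥Gsub, (p ^ α) • y = 0 := by
    intro y
    refine Subtype.ext ?_
    show (p ^ α) • (y : Fin k → ZMod (p ^ α)) = 0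
    funext i
    show (p ^ α) • (y : Fin k → ZMod (p ^ α)) i = 0
    rw [nsmul_eq_mul, Nat.cast_pow, ← Nat.cast_pow, ZMod.natCast_self, zero_mul]
  -- get a minimal cyclic decomposition
  obtain ⟨c, ⟨e0⟩⟩ := exists_groupRank_equiv ↥Gsub
  let c' : Fin r → ℕ := fun i => c ((finCongr hrk).symm i)
  let e0' : ↥Gsub ≃+ ∀ i : Fin r, ZMod (c' i) :=
    e0.trans (piCongrLeftAdd (fun i => ZMod (c i)) (finCongr hrk))
  have hne1 : ∀ i, c' i ≠ 1 := by
    intro i0 h1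
    have hle := groupRank_le_card_ne_one c' e0'
    rw [hrk] at hle
    have hlt : Fintype.card {i // c' i ≠ 1} < Fintype.card (Fin r) :=
      Fintype.card_subtype_lt (x := i0) (by simp [h1])
    rw [Fintype.card_fin] at hlt
    omega
  have hdvdq : ∀ i, c' i ∣ p ^ α := by
    intro i
    have hkillP : ∀ x : (∀ i, ZMod (c' i)), (p ^ α) • x = 0 := by
      intro x
      have : x = e0' (e0'.symm x) := (e0'.apply_symm_apply x).symm
      rw [this, ← map_nsmul, killer, map_zero]
    have h2 := congrFun (hkillP (Pi.single i 1)) i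
    rw [Pi.smul_apply, Pi.single_eq_same, Pi.zero_apply] at h2
    rw [nsmul_eq_mul, mul_one] at h2
    rwa [Nat.cast_pow, ← Nat.cast_pow, ZMod.natCast_eq_zero_iff] at h2
  choose β hβle hβeq using fun i => (Nat.dvd_prime_pow hp).mp (hdvdq i)
  have hβ1 : ∀ i, 1 ≤ β i := by
    intro i
    rcases Nat.eq_zero_or_pos (β i) with h0 | h
    · exfalso; apply hne1 i; rw [hβeq i, h0, pow_zero]
    · exact h
  let eP : ↥Gsub ≃+ ∀ i : Fin r, ZMod (p ^ β i) :=
    e0'.trans (AddEquiv.piCongrRight fun i => (ZMod.ringEquivCongr (hβeq i)).toAddEquiv)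
  -- instances
  haveI : Finite ↥Gsub := Subtype.finite
  -- === Row selection ===
  have hSkill : ∀ x : ↥((pHom p ↥Gsub).ker), p • x = 0 := by
    rintro ⟨x, hx⟩
    have hx' : p • x = 0 := hx
    exact Subtype.ext hx'
  haveI instS : Module (ZMod p) ↥((pHom p ↥Gsub).ker) := AddCommGroup.zmodModule hSkill
  haveI : Finite ↥((pHom p ↥Gsub).ker) := Subtype.finite
  haveI : Module.Finite (ZMod p) ↥((pHom p ↥Gsub).ker) := Module.Finite.of_finite
  let σ : ↥((pHom p (ZMod (p ^ α))).ker) ≃+ ZMod p := socleEquivSingle hp hα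
  have hmemcoord : ∀ (x : ↥((pHom p ↥Gsub).ker)) (i : Fin k),
      (x : ↥Gsub).1 i ∈ (pHom p (ZMod (p ^ α))).ker := by
    rintro ⟨⟨x, hxG⟩, hx⟩ i
    have hx' : p • (⟨x, hxG⟩ : ↥Gsub) = 0 := hx
    have hx'' : p • x = 0 := congrArg Subtype.val hx'
    have := congrFun hx'' i
    simpa using this
  let hom0 : Fin k → (↥((pHom p ↥Gsub).ker) →+ ↥((pHom p (ZMod (p ^ α))).ker)) := fun i =>
    { toFun := fun x => ⟨(x : ↥Gsub).1 i, hmemcoord x i⟩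
      map_zero' := rfl
      map_add' := fun a b => rfl }
  let φ : Fin k → (↥((pHom p ↥Gsub).ker) →ₗ[ZMod p] ZMod p) := fun i =>
    (σ.toAddMonoidHom.comp (hom0 i)).toZModLinearMap p
  have hφzero : ∀ (i : Fin k) (x : ↥((pHom p ↥Gsub).ker)), φ i x = 0 ↔ (x : ↥Gsub).1 i = 0 := by
    intro i x
    constructor
    · intro h
      have h2 : σ (hom0 i x) = 0 := h
      have h3 : hom0 i x = 0 := by
        apply σ.injective
        rw [h2, map_zero]
      exact Subtype.ext_iff.mp h3
    · intro h
      have h3 : hom0 i x = 0 := Subtype.ext h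
      show σ (hom0 i x) = 0
      rw [h3, map_zero]
  have hsep : ∀ x : ↥((pHom p ↥Gsub).ker), (∀ i, φ i x = 0) → x = 0 := by
    intro x hx
    refine Subtype.ext (Subtype.ext ?_)
    funext i
    exact (hφzero i x).mp (hx i)
  have hfrS : Module.finrank (ZMod p) ↥((pHom p ↥Gsub).ker) = r := by
    have e1 : ↥((pHom p ↥Gsub).ker) ≃+ ↥((pHom p (∀ i : Fin r, ZMod (p ^ β i))).ker) := kerCongr p eP
    have e2 := socleEquivPi hp hβ1
    rw [finrank_congr (e1.trans e2), Module.finrank_fin_fun]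
  obtain ⟨f, hfinj, hfker⟩ := sep_exists (ZMod p) r ↥((pHom p ↥Gsub).ker) (Fin k) φ hfrS hsep
  have hrow : ∀ x : ↥Gsub, p • x = 0 →
      (∀ j, (x : Fin k → ZMod (p ^ α)) (f j) = 0) → x = 0 := by
    intro x hx hz
    have hxS : (pHom p ↥Gsub) x = 0 := hx
    have := hfker ⟨x, hxS⟩ (fun j => (hφzero (f j) ⟨x, hxS⟩).mpr (hz j))
    exact Subtype.ext_iff.mp this
  -- === Column selection ===
  haveI instV : Module (ZMod p) (↥Gsub ⧸ (pHom p ↥Gsub).range) :=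
    QuotientAddGroup.zmodModule (n := p) (fun x => ⟨x, rfl⟩)
  haveI : Finite (↥Gsub ⧸ (pHom p ↥Gsub).range) := Quotient.finite _
  let colG : Fin l → ↥Gsub := fun j =>
    ⟨fun i => A i j, AddSubgroup.subset_closure ⟨j, rfl⟩⟩
  have hclos : AddSubgroup.closure (Set.range colG) = ⊤ := by
    apply AddSubgroup.map_injective (AddSubgroup.subtype_injective Gsub)
    rw [AddMonoidHom.map_closure, ← AddMonoidHom.range_eq_map, AddSubgroup.subtype_range,
      ← Set.range_comp]
    rfl
  let cbar : Fin l → (↥Gsub ⧸ (pHom p ↥Gsub).range) := fun j => QuotientAddGroup.mk (colG j)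
  have hspan : Submodule.span (ZMod p) (Set.range cbar) = ⊤ := by
    rw [eq_top_iff]
    rintro v -
    induction v using QuotientAddGroup.induction_on with
    | H x =>
      have hx : x ∈ AddSubgroup.closure (Set.range colG) := by rw [hclos]; trivial
      refine AddSubgroup.closure_induction
        (p := fun y _ => (QuotientAddGroup.mk y : ↥Gsub ⧸ (pHom p ↥Gsub).range) ∈
          Submodule.span (ZMod p) (Set.range cbar)) ?_ ?_ ?_ ?_ hx
      · rintro y ⟨j, rfl⟩
        exact Submodule.subset_span ⟨j, rfl⟩
      · exact zero_mem _
      · intro a b _ _ ha hb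
        exact add_mem ha hb
      · intro a _ ha
        have : (QuotientAddGroup.mk (-a) : ↥Gsub ⧸ (pHom p ↥Gsub).range) = -QuotientAddGroup.mk a := rfl
        rw [this]
        exact neg_mem ha
  obtain ⟨b, hbsub, hbspan, hbindep⟩ := exists_linearIndependent (ZMod p) (Set.range cbar)
  rw [hspan] at hbspan
  haveI : Fintype b := (Set.toFinite b).fintype
  let bas : Module.Basis b (ZMod p) (↥Gsub ⧸ (pHom p ↥Gsub).range) := Module.Basis.mk hbindep (by
    rw [Subtype.range_val, hbspan])
  have hfrV : Module.finrank (ZMod p) (↥Gsub ⧸ (pHom p ↥Gsub).range) = r := by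
    have e1 : (↥Gsub ⧸ (pHom p ↥Gsub).range) ≃+ ((∀ i : Fin r, ZMod (p ^ β i)) ⧸
        (pHom p (∀ i : Fin r, ZMod (p ^ β i))).range) :=
      QuotientAddGroup.congr _ _ eP (map_pHom_range p eP)
    rw [finrank_congr (e1.trans (quotEquivPi hp hβ1)), Module.finrank_fin_fun]
  have hcard : Fintype.card b = r := by
    have := Module.finrank_eq_card_basis bas
    rw [hfrV] at this
    omega
  let eb : Fin r ≃ b := (Fintype.equivFinOfCardEq hcard).symm
  let g : Fin r → Fin l := fun i => (hbsub (eb i).2).choose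
  have hg : ∀ i, cbar (g i) = (eb i).1 := fun i => (hbsub (eb i).2).choose_spec
  have hginj : Function.Injective g := by
    intro i1 i2 h12
    have h1 := hg i1
    rw [h12, hg i2] at h1
    exact eb.injective (Subtype.ext h1.symm)
  -- Nakayama: the selected columns generate `Gsub`
  let Hsub := AddSubgroup.closure (Set.range (colG ∘ g))
  have hstep : ∀ x : ↥Gsub, ∃ h ∈ Hsub, ∃ y, x = h + p • y := by
    intro x
    have hmem : (QuotientAddGroup.mk x : ↥Gsub ⧸ (pHom p ↥Gsub).range) ∈
        AddSubgroup.map (QuotientAddGroup.mk' ((pHom p ↥Gsub).range)) Hsub := by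
      have hble : b ⊆ Set.range (cbar ∘ g) := by
        intro v hv
        refine ⟨eb.symm ⟨v, hv⟩, ?_⟩
        show cbar (g (eb.symm ⟨v, hv⟩)) = v
        rw [hg]
        simp
      have hsubm : Submodule.span (ZMod p) (Set.range (cbar ∘ g)) ≤
          AddSubgroup.toZModSubmodule p
            (AddSubgroup.map (QuotientAddGroup.mk' ((pHom p ↥Gsub).range)) Hsub) := by
        rw [Submodule.span_le]
        rintro - ⟨i, rfl⟩
        show (cbar (g i)) ∈ AddSubgroup.map _ Hsub
        exact ⟨colG (g i), AddSubgroup.subset_closure ⟨i, rfl⟩, rfl⟩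
      have htop : (QuotientAddGroup.mk x : ↥Gsub ⧸ (pHom p ↥Gsub).range) ∈
          Submodule.span (ZMod p) (Set.range (cbar ∘ g)) := by
        have : (⊤ : Submodule (ZMod p) (↥Gsub ⧸ (pHom p ↥Gsub).range)) ≤
            Submodule.span (ZMod p) (Set.range (cbar ∘ g)) := by
          rw [← hbspan]
          exact Submodule.span_le.mpr
            (fun v hv => Submodule.span_mono hble (Submodule.subset_span hv))
        exact this trivial
      exact hsubm htop
    obtain ⟨h, hh, heq⟩ := hmem
    have heq' : (QuotientAddGroup.mk h : ↥Gsub ⧸ (pHom p ↥Gsub).range) = QuotientAddGroup.mk x := heq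
    have hsub : h - x ∈ (pHom p ↥Gsub).range :=
      QuotientAddGroup.eq_iff_sub_mem.mp heq'
    obtain ⟨y, hy⟩ := hsub
    refine ⟨h, hh, -y, ?_⟩
    have hy' : p • y = h - x := hy
    rw [smul_neg, hy']
    abel
  have hNak : Hsub = ⊤ := by
    have key : ∀ n, ∀ x : ↥Gsub, ∃ h ∈ Hsub, ∃ y, x = h + (p ^ n) • y := by
      intro n
      induction n with
      | zero =>
        intro x
        exact ⟨0, zero_mem _, x, by simp⟩
      | succ n ihn =>
        intro x
        obtain ⟨h, hh, y, hy⟩ := ihn x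
        obtain ⟨h2, hh2, z, hz⟩ := hstep y
        refine ⟨h + (p ^ n) • h2, add_mem hh (AddSubgroup.nsmul_mem _ hh2 _), z, ?_⟩
        rw [hy, hz, smul_add, add_assoc, smul_smul, ← pow_succ]
    rw [eq_top_iff]
    rintro x -
    obtain ⟨h, hh, y, hy⟩ := key α x
    rw [killer y, add_zero] at hy
    rw [hy]
    exact hh
  -- === Assembly ===
  let π : (Fin k → ZMod (p ^ α)) →+ (Fin r → ZMod (p ^ α)) :=
    AddMonoidHom.mk' (fun v => v ∘ f) (fun a b => rfl)
  let hcomp : ↥Gsub →+ (Fin r → ZMod (p ^ α)) := π.comp Gsub.subtype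
  have hhinj : Function.Injective hcomp := by
    rw [injective_iff_map_eq_zero]
    intro x hx0
    by_contra hxne
    have hkill : ∃ n, (p ^ n) • x = 0 := ⟨α, killer x⟩
    have hn0pos : 0 < Nat.find hkill := by
      rcases Nat.eq_zero_or_pos (Nat.find hkill) with h0 | h
      · exfalso
        have := Nat.find_spec hkill
        rw [h0, pow_zero, one_smul] at this
        exact hxne this
      · exact h
    have hyne : (p ^ (Nat.find hkill - 1)) • x ≠ 0 := Nat.find_min hkill (by omega)
    apply hyne
    refine hrow _ ?_ ?_
    · rw [smul_smul, ← pow_succ']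
      have : Nat.find hkill - 1 + 1 = Nat.find hkill := by omega
      rw [this]
      exact Nat.find_spec hkill
    · intro j
      have hx0j : (x : Fin k → ZMod (p ^ α)) (f j) = 0 := congrFun hx0 j
      show ((p ^ (Nat.find hkill - 1)) • (x : Fin k → ZMod (p ^ α))) (f j) = 0
      rw [Pi.smul_apply, hx0j, smul_zero]
  have hcols : colSpan (A.submatrix f g) = hcomp.range := by
    have h1 : AddSubgroup.closure (Set.range fun j => (fun i => A i (g j))) = Gsub := by
      have h2 := congrArg (AddSubgroup.map Gsub.subtype) hNak
      rw [AddMonoidHom.map_closure, ← AddMonoidHom.range_eq_map,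
        AddSubgroup.subtype_range] at h2
      rw [← h2, ← Set.range_comp]
      rfl
    have h3 : hcomp.range = AddSubgroup.map π Gsub := by
      ext z
      simp only [AddMonoidHom.mem_range, AddSubgroup.mem_map]
      constructor
      · rintro ⟨x, rfl⟩
        exact ⟨x.1, x.2, rfl⟩
      · rintro ⟨x, hx, rfl⟩
        exact ⟨⟨x, hx⟩, rfl⟩
    rw [h3, ← h1]
    show AddSubgroup.closure _ = AddSubgroup.map π (AddSubgroup.closure _)
    rw [AddMonoidHom.map_closure, ← Set.range_comp]
    rfl
  refine ⟨f, g, hfinj, hginj, ?_⟩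
  show groupRank ↥(colSpan (A.submatrix f g)) = r
  rw [hcols, ← groupRank_congr (AddMonoidHom.ofInjective hhinj), hrk]
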